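/- Let (e₁,…,e_n) be an orthonormal basis of X. For I ⊆ {1,…,n}, define the creation operator a_I† : ⋀X → ⋀X by a_I†(M) = e_I ∧ M and the annihilation operator a_I : ⋀X → ⋀X by a_I(M) = e_I ⌟ M. Given I, J, K ⊆ {1,…,n}, set x = J∖(I∪K), y = (I∩K)∖J, a = I∖(J∪K), b = (J∩K)∖I, c = I∩J∩K, d = (I∩J)∖K, and e = K∖(I∪J). Then the supercommutator ⟦a_I†, a_J⟧ := a_I† ∘ a_J − (−1)^{|I|·|J|} a_J ∘ a_I† satisfies: ⟦a_I†, a_J⟧ e_K = 0 if x ∪ y ≠ ∅, and if x ∪ y = ∅ then ⟦a_I†, a_J⟧ e_K = (δ_{d=∅} − δ_{c=∅}) · (−1)^{|d| + ⟨a∪b, d∪e⟩} · e_{a∪c∪e}, where δ_P = 1 if P holds and 0 otherwise, and ⟨P,Q⟩ denotes the number of pairs (p,q) ∈ P×Q with p > q. -/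

import Mathlib

open scoped RealInnerProductSpace

/-- The blade `v₁ ∧ ⋯ ∧ v_k` in the exterior algebra. -/
noncomputable def expBlade {X : Type*} [AddCommGroup X] [Module ℝ X] {k : ℕ}
    (v : Fin k → X) : ExteriorAlgebra ℝ X :=
  (List.ofFn fun i => ExteriorAlgebra.ι ℝ (v i)).prod

/-- The subblade of `v₁ ∧ ⋯ ∧ v_n` with factors indexed by `I`, taken in increasing order. -/
noncomputable def expBladeSub {X : Type*} [AddCommGroup X] [Module ℝ X] {n : ℕ}
    (v : Fin n → X) (I : Finset (Fin n)) : ExteriorAlgebra ℝ X :=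
  ((I.sort (· ≤ ·)).map fun i => ExteriorAlgebra.ι ℝ (v i)).prod

/-- `⟨P,Q⟩`: the number of pairs `(p,q) ∈ P × Q` with `p > q`. -/
def pairsCount {α : Type*} [LinearOrder α] (P Q : Finset α) : ℕ :=
  ((P ×ˢ Q).filter fun z => z.2 < z.1).card




lemma pairsCount_eq_sum {α : Type*} [LinearOrder α] (P Q : Finset α) :
    pairsCount P Q = ∑ p ∈ P, (Q.filter (· < p)).card := by
  unfold pairsCount
  rw [Finset.card_filter, Finset.sum_product]
  exact Finset.sum_congr rfl fun p _ => (Finset.card_filter _ _).symm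

lemma pairsCount_empty_left {α : Type*} [LinearOrder α] (Q : Finset α) :
    pairsCount ∅ Q = 0 := by simp [pairsCount_eq_sum]

lemma pairsCount_insert {α : Type*} [LinearOrder α] [DecidableEq α] {m : α} {P : Finset α} (Q : Finset α)
    (h : m ∉ P) :
    pairsCount (insert m P) Q = (Q.filter (· < m)).card + pairsCount P Q := by
  simp [pairsCount_eq_sum, Finset.sum_insert h]

lemma pairsCount_union_left {α : Type*} [LinearOrder α] [DecidableEq α] {P P' : Finset α} (Q : Finset α)
    (h : Disjoint P P') :
    pairsCount (P ∪ P') Q = pairsCount P Q + pairsCount P' Q := by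
  simp [pairsCount_eq_sum, Finset.sum_union h]

lemma pairsCount_union_right {α : Type*} [LinearOrder α] [DecidableEq α] (P : Finset α) {Q Q' : Finset α}
    (h : Disjoint Q Q') :
    pairsCount P (Q ∪ Q') = pairsCount P Q + pairsCount P Q' := by
  simp only [pairsCount_eq_sum, Finset.filter_union, ← Finset.sum_add_distrib]
  refine Finset.sum_congr rfl fun p _ => ?_
  exact Finset.card_union_of_disjoint (h.mono (Finset.filter_subset _ _) (Finset.filter_subset _ _))

lemma pairsCount_add_swap {α : Type*} [LinearOrder α] {P Q : Finset α} (h : Disjoint P Q) :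
    pairsCount P Q + pairsCount Q P = P.card * Q.card := by
  simp only [pairsCount_eq_sum, Finset.card_filter]
  have swap : (∑ q ∈ Q, ∑ p ∈ P, (if p < q then 1 else 0)) =
      ∑ p ∈ P, ∑ q ∈ Q, (if p < q then 1 else 0) := Finset.sum_comm
  rw [swap, ← Finset.sum_add_distrib]
  have key : ∀ p ∈ P, ((∑ q ∈ Q, if q < p then 1 else 0) +
      ∑ q ∈ Q, (if p < q then 1 else 0)) = Q.card := by
    intro p hp
    rw [← Finset.sum_add_distrib]
    have this1 : ∀ q ∈ Q, ((if q < p then 1 else 0) + if p < q then 1 else 0) = 1 := by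
      intro q hq
      have hne : q ≠ p := fun hqp => Finset.disjoint_left.mp h hp (hqp ▸ hq)
      rcases lt_or_gt_of_ne hne with h1 | h1 <;> simp [h1, not_lt_of_gt h1]
    rw [Finset.sum_congr rfl this1, Finset.sum_const, smul_eq_mul, mul_one]
  rw [Finset.sum_congr rfl key, Finset.sum_const, smul_eq_mul]

lemma pairsCount_empty_right {α : Type*} [LinearOrder α] (P : Finset α) :
    pairsCount P ∅ = 0 := by simp [pairsCount_eq_sum]

lemma negpow_eq {m k : ℕ} (h : (m : ZMod 2) = (k : ZMod 2)) : (-1 : ℝ) ^ m = (-1 : ℝ) ^ k := by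
  have h2 : m % 2 = k % 2 := (ZMod.natCast_eq_natCast_iff' m k 2).mp h
  rw [neg_one_pow_eq_pow_mod_two, h2, ← neg_one_pow_eq_pow_mod_two]



section blades
variable {X : Type*} [AddCommGroup X] [Module ℝ X] {n : ℕ} (v : Fin n → X)

lemma Ee_empty : expBladeSub v (∅ : Finset (Fin n)) = 1 := by simp [expBladeSub]

lemma Ee_insert_min {i : Fin n} {S : Finset (Fin n)} (h1 : ∀ j ∈ S, i ≤ j) (h2 : i ∉ S) :
    expBladeSub v (insert i S) = ExteriorAlgebra.ι ℝ (v i) * expBladeSub v S := by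
  unfold expBladeSub
  rw [show (insert i S).sort (· ≤ ·) = i :: S.sort (· ≤ ·) from Finset.sort_insert _ h1 h2,
    List.map_cons, List.prod_cons]

lemma Ee_min {S : Finset (Fin n)} (hS : S.Nonempty) :
    expBladeSub v S =
      ExteriorAlgebra.ι ℝ (v (S.min' hS)) * expBladeSub v (S.erase (S.min' hS)) := by
  conv_lhs => rw [← Finset.insert_erase (S.min'_mem hS)]
  exact Ee_insert_min v (fun j hj => S.min'_le j (Finset.mem_of_mem_erase hj))
    (Finset.notMem_erase _ _)

lemma iota_mul_Ee (i : Fin n) (B : Finset (Fin n)) :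
    ExteriorAlgebra.ι ℝ (v i) * expBladeSub v B =
      if i ∈ B then 0
      else (-1 : ℝ) ^ ((B.filter (· < i)).card) • expBladeSub v (insert i B) := by
  induction B using Finset.strongInduction with
  | _ B ih =>
  rcases B.eq_empty_or_nonempty with rfl | hB
  · have hsing : expBladeSub v ({i} : Finset (Fin n)) = ExteriorAlgebra.ι ℝ (v i) := by
      simp [expBladeSub]
    simp [Ee_empty, hsing]
  · set m := B.min' hB with hm
    have hBm := Ee_min v hB
    rcases lt_trichotomy i m with hlt | heq | hgt
    · have hiB : i ∉ B := fun h => absurd (B.min'_le i h) (not_le.mpr hlt)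
      rw [if_neg hiB]
      have hf : B.filter (· < i) = ∅ := by
        refine Finset.filter_eq_empty_iff.mpr fun b hb => not_lt.mpr ?_
        exact le_trans (le_of_lt hlt) (B.min'_le b hb)
      rw [hf, Finset.card_empty, pow_zero, one_smul,
        Ee_insert_min v (fun j hj => le_of_lt (lt_of_lt_of_le hlt (B.min'_le j hj))) hiB]
    · subst heq
      rw [hBm, ← mul_assoc, ExteriorAlgebra.ι_sq_zero, zero_mul, if_pos (B.min'_mem hB)]
    · have hine : i ≠ m := ne_of_gt hgt
      have anti : ExteriorAlgebra.ι ℝ (v i) * ExteriorAlgebra.ι ℝ (v m) =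
          -(ExteriorAlgebra.ι ℝ (v m) * ExteriorAlgebra.ι ℝ (v i)) :=
        eq_neg_of_add_eq_zero_left (ExteriorAlgebra.ι_add_mul_swap _ _)
      rw [hBm, ← mul_assoc, anti, neg_mul, mul_assoc,
        ih (B.erase m) (Finset.erase_ssubset (B.min'_mem hB))]
      by_cases hiB' : i ∈ B.erase m
      · rw [if_pos hiB', mul_zero, neg_zero, if_pos (Finset.mem_of_mem_erase hiB')]
      · have hiB : i ∉ B := fun h => hiB' (Finset.mem_erase.mpr ⟨hine, h⟩)
        rw [if_neg hiB', if_neg hiB, mul_smul_comm]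
        have hmem : m ∉ insert i (B.erase m) := by
          simp [Finset.mem_insert, hine.symm]
        have hle : ∀ j ∈ insert i (B.erase m), m ≤ j := by
          intro j hj
          rcases Finset.mem_insert.mp hj with rfl | hj
          · exact le_of_lt hgt
          · exact B.min'_le j (Finset.mem_of_mem_erase hj)
        rw [← Ee_insert_min v hle hmem]
        have hset : insert m (insert i (B.erase m)) = insert i B := by
          rw [Finset.insert_comm, Finset.insert_erase (B.min'_mem hB)]
        have hcard : (B.filter (· < i)).card = ((B.erase m).filter (· < i)).card + 1 := by
          have hfe : B.filter (· < i) = insert m ((B.erase m).filter (· < i)) := by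
            ext t
            simp only [Finset.mem_filter, Finset.mem_insert, Finset.mem_erase]
            constructor
            · rintro ⟨htB, hti⟩
              by_cases htm : t = m
              · exact Or.inl htm
              · exact Or.inr ⟨⟨htm, htB⟩, hti⟩
            · rintro (rfl | ⟨⟨_, htB⟩, hti⟩)
              · exact ⟨B.min'_mem hB, hgt⟩
              · exact ⟨htB, hti⟩
          rw [hfe, Finset.card_insert_of_notMem (by simp)]
        rw [hset, hcard, pow_succ, mul_neg_one, neg_smul]

lemma Ee_mul_Ee (A B : Finset (Fin n)) :
    expBladeSub v A * expBladeSub v B =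
      if Disjoint A B then (-1 : ℝ) ^ (pairsCount A B) • expBladeSub v (A ∪ B) else 0 := by
  induction A using Finset.strongInduction with
  | _ A ih =>
  rcases A.eq_empty_or_nonempty with rfl | hA
  · simp [Ee_empty, pairsCount_empty_left]
  · set m := A.min' hA with hm
    rw [Ee_min v hA, mul_assoc, ih (A.erase m) (Finset.erase_ssubset (A.min'_mem hA))]
    by_cases hdis : Disjoint (A.erase m) B
    · rw [if_pos hdis, mul_smul_comm, iota_mul_Ee]
      have hmA' : m ∉ A.erase m := Finset.notMem_erase _ _
      by_cases hmB : m ∈ B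
      · rw [if_pos (Finset.mem_union.mpr (Or.inr hmB)), smul_zero,
          if_neg (fun h => (Finset.disjoint_left.mp h (A.min'_mem hA)) hmB)]
      · have hmAB : m ∉ A.erase m ∪ B := by simp [hmA', hmB]
        rw [if_neg hmAB, smul_smul, ← pow_add]
        have hdisAB : Disjoint A B := by
          rw [← Finset.insert_erase (A.min'_mem hA), Finset.disjoint_insert_left]
          exact ⟨hmB, hdis⟩
        rw [if_pos hdisAB]
        have hsets : insert m (A.erase m ∪ B) = A ∪ B := by
          rw [← Finset.insert_union, Finset.insert_erase (A.min'_mem hA)]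
        have hfilter : (A.erase m ∪ B).filter (· < m) = B.filter (· < m) := by
          ext t
          simp only [Finset.mem_filter, Finset.mem_union, Finset.mem_erase]
          constructor
          · rintro ⟨htAB, htm⟩
            rcases htAB with ⟨_, htA⟩ | htB
            · exact absurd (A.min'_le t htA) (not_le.mpr htm)
            · exact ⟨htB, htm⟩
          · rintro ⟨htB, htm⟩; exact ⟨Or.inr htB, htm⟩
        have hpc : pairsCount A B = pairsCount (A.erase m) B + (B.filter (· < m)).card := by
          conv_lhs => rw [← Finset.insert_erase (A.min'_mem hA)]
          rw [pairsCount_insert _ (Finset.notMem_erase _ _)]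
          ring
        rw [hsets, hfilter, hpc, add_comm (pairsCount (A.erase m) B)]
    · rw [if_neg hdis, mul_zero, if_neg (fun h => hdis (h.mono_left (Finset.erase_subset _ _)))]
end blades
section contraction
variable {X : Type*} [NormedAddCommGroup X] [InnerProductSpace ℝ X]
    [FiniteDimensional ℝ X]
    {n : ℕ} (eb : OrthonormalBasis (Fin n) ℝ X)
    (ginv : ExteriorAlgebra ℝ X →ₐ[ℝ] ExteriorAlgebra ℝ X)
    (hginv : ∀ v : X, ginv (ExteriorAlgebra.ι ℝ v) = - ExteriorAlgebra.ι ℝ v)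
    (lc : X → ExteriorAlgebra ℝ X →ₗ[ℝ] ExteriorAlgebra ℝ X)
    (hlc_one : ∀ v : X, lc v 1 = 0)
    (hlc_vec : ∀ v w : X, lc v (ExteriorAlgebra.ι ℝ w) = algebraMap ℝ (ExteriorAlgebra ℝ X) ⟪v, w⟫)
    (hlc_mul : ∀ (v : X) (M N : ExteriorAlgebra ℝ X),
      lc v (M * N) = lc v M * N + ginv M * lc v N)
    (LC : ExteriorAlgebra ℝ X →ₗ[ℝ] ExteriorAlgebra ℝ X →ₗ[ℝ] ExteriorAlgebra ℝ X)
    (hLC_one : ∀ N : ExteriorAlgebra ℝ X, LC 1 N = N)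
    (hLC_vec : ∀ (v : X) (N : ExteriorAlgebra ℝ X), LC (ExteriorAlgebra.ι ℝ v) N = lc v N)
    (hLC_mul : ∀ (v : X) (M N : ExteriorAlgebra ℝ X),
      LC (ExteriorAlgebra.ι ℝ v * M) N = LC M (lc v N))

include hginv hlc_one hlc_vec hlc_mul in
lemma lc_Ee (i : Fin n) (T : Finset (Fin n)) :
    lc (eb i) (expBladeSub (fun j => eb j) T) =
      if i ∈ T then
        (-1 : ℝ) ^ ((T.filter (· < i)).card) • expBladeSub (fun j => eb j) (T.erase i)
      else 0 := by
  induction T using Finset.strongInduction with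
  | _ T ih =>
  rcases T.eq_empty_or_nonempty with rfl | hT
  · simp [Ee_empty, hlc_one]
  · set m := T.min' hT with hm
    rw [Ee_min (fun j => eb j) hT, hlc_mul, hlc_vec, hginv,
      orthonormal_iff_ite.mp eb.orthonormal,
      ih (T.erase m) (Finset.erase_ssubset (T.min'_mem hT))]
    by_cases him : i = m
    · subst him
      have hf : T.filter (· < m) = ∅ :=
        Finset.filter_eq_empty_iff.mpr fun b hb => not_lt.mpr (T.min'_le b hb)
      rw [if_pos rfl, if_neg (Finset.notMem_erase _ _), if_pos (T.min'_mem hT), hf]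
      simp [hm]
    · rw [if_neg him, map_zero, zero_mul, zero_add, neg_mul]
      by_cases hiT : i ∈ T
      · have hmi : m < i := lt_of_le_of_ne (T.min'_le i hiT) (Ne.symm him)
        have hiT' : i ∈ T.erase m := Finset.mem_erase.mpr ⟨him, hiT⟩
        rw [if_pos hiT', if_pos hiT, mul_smul_comm]
        have hmem : m ∉ (T.erase m).erase i := by
          rw [Finset.erase_right_comm]
          exact Finset.notMem_erase _ _
        have hle : ∀ j ∈ (T.erase m).erase i, m ≤ j := fun j hj =>
          T.min'_le j (Finset.mem_of_mem_erase (Finset.mem_of_mem_erase hj))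
        rw [← Ee_insert_min (fun j => eb j) hle hmem]
        have hset : insert m ((T.erase m).erase i) = T.erase i := by
          rw [Finset.erase_right_comm, Finset.insert_erase
            (Finset.mem_erase.mpr ⟨Ne.symm him, T.min'_mem hT⟩)]
        have hcard : (T.filter (· < i)).card = ((T.erase m).filter (· < i)).card + 1 := by
          have hfe : T.filter (· < i) = insert m ((T.erase m).filter (· < i)) := by
            ext t
            simp only [Finset.mem_filter, Finset.mem_insert, Finset.mem_erase]
            constructor
            · rintro ⟨htT, hti⟩
              by_cases htm : t = m
              · exact Or.inl htm
              · exact Or.inr ⟨⟨htm, htT⟩, hti⟩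
            · rintro (rfl | ⟨⟨_, htT⟩, hti⟩)
              · exact ⟨T.min'_mem hT, hmi⟩
              · exact ⟨htT, hti⟩
          rw [hfe, Finset.card_insert_of_notMem (by simp)]
        rw [hset, hcard, pow_succ, mul_neg_one, neg_smul]
      · have hiT' : i ∉ T.erase m := fun h => hiT (Finset.mem_of_mem_erase h)
        rw [if_neg hiT', if_neg hiT, mul_zero, neg_zero]

include hginv hlc_one hlc_vec hlc_mul hLC_one hLC_vec hLC_mul in
lemma LC_Ee (S T : Finset (Fin n)) :
    LC (expBladeSub (fun j => eb j) S) (expBladeSub (fun j => eb j) T) =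
      if S ⊆ T then
        (-1 : ℝ) ^ (pairsCount S (T \ S)) • expBladeSub (fun j => eb j) (T \ S)
      else 0 := by
  induction S using Finset.strongInduction generalizing T with
  | _ S ih =>
  rcases S.eq_empty_or_nonempty with rfl | hS
  · rw [Ee_empty, hLC_one, if_pos (Finset.empty_subset T), pairsCount_empty_left,
      pow_zero, one_smul, Finset.sdiff_empty]
  · set m := S.min' hS with hm
    have hmS : m ∈ S := S.min'_mem hS
    rw [Ee_min (fun j => eb j) hS, hLC_mul,
      lc_Ee eb ginv hginv lc hlc_one hlc_vec hlc_mul m T]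
    by_cases hmT : m ∈ T
    · rw [if_pos hmT, map_smul, ih (S.erase m) (Finset.erase_ssubset hmS) (T.erase m)]
      by_cases hsub : S ⊆ T
      · have hsub' : S.erase m ⊆ T.erase m := fun s hs => Finset.mem_erase.mpr
          ⟨(Finset.mem_erase.mp hs).1, hsub (Finset.mem_of_mem_erase hs)⟩
        rw [if_pos hsub', if_pos hsub, smul_smul, ← pow_add]
        have hset : T.erase m \ S.erase m = T \ S := by
          ext t
          simp only [Finset.mem_sdiff, Finset.mem_erase]
          constructor
          · rintro ⟨⟨htm, htT⟩, hns⟩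
            exact ⟨htT, fun hts => hns ⟨htm, hts⟩⟩
          · rintro ⟨htT, hns⟩
            exact ⟨⟨fun h => hns (h ▸ hmS), htT⟩, fun h => hns h.2⟩
        rw [hset]
        have hpc : pairsCount S (T \ S) =
            ((T \ S).filter (· < m)).card + pairsCount (S.erase m) (T \ S) := by
          have h0 := pairsCount_insert (m := m) (P := S.erase m) (T \ S)
            (Finset.notMem_erase _ _)
          rwa [Finset.insert_erase hmS] at h0
        have hfil : T.filter (· < m) = (T \ S).filter (· < m) := by
          ext t
          simp only [Finset.mem_filter, Finset.mem_sdiff]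
          constructor
          · rintro ⟨htT, htm⟩
            exact ⟨⟨htT, fun hts => not_lt.mpr (S.min'_le t hts) htm⟩, htm⟩
          · rintro ⟨⟨htT, _⟩, htm⟩
            exact ⟨htT, htm⟩
        rw [hpc, hfil]
      · have hsub' : ¬ (S.erase m ⊆ T.erase m) := by
          intro h
          apply hsub
          intro s hs
          by_cases hsm : s = m
          · exact hsm ▸ hmT
          · exact Finset.mem_of_mem_erase (h (Finset.mem_erase.mpr ⟨hsm, hs⟩))
        rw [if_neg hsub', if_neg hsub, smul_zero]
    · rw [if_neg hmT, map_zero, if_neg (fun h => hmT (h hmS))]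
end contraction

set_option maxHeartbeats 1000000 in
/-- the supercommutator `⟦a_I†, a_J⟧` of multi-fermion creation and
annihilation operators, evaluated on a basis multivector `e_K`. -/
theorem stmt19 {X : Type*} [NormedAddCommGroup X] [InnerProductSpace ℝ X]
    [FiniteDimensional ℝ X]
    {n : ℕ} (eb : OrthonormalBasis (Fin n) ℝ X)
    -- the grade involution: the unique algebra automorphism with `v̂ = -v` on vectors
    (ginv : ExteriorAlgebra ℝ X →ₐ[ℝ] ExteriorAlgebra ℝ X)
    (hginv : ∀ v : X, ginv (ExteriorAlgebra.ι ℝ v) = - ExteriorAlgebra.ι ℝ v)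
    -- the left contraction by a vector, characterized by its defining properties
    (lc : X → ExteriorAlgebra ℝ X →ₗ[ℝ] ExteriorAlgebra ℝ X)
    (hlc_one : ∀ v : X, lc v 1 = 0)
    (hlc_vec : ∀ v w : X, lc v (ExteriorAlgebra.ι ℝ w) = algebraMap ℝ (ExteriorAlgebra ℝ X) ⟪v, w⟫)
    (hlc_mul : ∀ (v : X) (M N : ExteriorAlgebra ℝ X),
      lc v (M * N) = lc v M * N + ginv M * lc v N)
    -- the left contraction `LC M N = M ⌟ N`, extended (bi)linearly in the contractor `M`
    (LC : ExteriorAlgebra ℝ X →ₗ[ℝ] ExteriorAlgebra ℝ X →ₗ[ℝ] ExteriorAlgebra ℝ X)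
    (hLC_one : ∀ N : ExteriorAlgebra ℝ X, LC 1 N = N)
    (hLC_vec : ∀ (v : X) (N : ExteriorAlgebra ℝ X), LC (ExteriorAlgebra.ι ℝ v) N = lc v N)
    (hLC_mul : ∀ (v : X) (M N : ExteriorAlgebra ℝ X),
      LC (ExteriorAlgebra.ι ℝ v * M) N = LC M (lc v N))
    (I J K : Finset (Fin n))
    (x y a b c d e' : Finset (Fin n))
    (hx : x = J \ (I ∪ K)) (hy : y = (I ∩ K) \ J)
    (ha : a = I \ (J ∪ K)) (hb : b = (J ∩ K) \ I)
    (hc : c = I ∩ J ∩ K) (hd : d = (I ∩ J) \ K)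
    (he : e' = K \ (I ∪ J))
    -- `scomm = ⟦a_I†, a_J⟧ e_K`, where `a_I† M = e_I ∧ M`, `a_J M = e_J ⌟ M`
    (scomm : ExteriorAlgebra ℝ X)
    (hscomm : scomm =
      expBladeSub (fun i => eb i) I * LC (expBladeSub (fun i => eb i) J)
          (expBladeSub (fun i => eb i) K) -
        ((-1 : ℝ) ^ (I.card * J.card)) •
          LC (expBladeSub (fun i => eb i) J)
            (expBladeSub (fun i => eb i) I * expBladeSub (fun i => eb i) K)) :
    (x ∪ y ≠ ∅ → scomm = 0) ∧
    (x ∪ y = ∅ → scomm =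
      (((if d = ∅ then (1 : ℝ) else 0) - (if c = ∅ then (1 : ℝ) else 0)) *
          (-1 : ℝ) ^ (d.card + pairsCount (a ∪ b) (d ∪ e'))) •
        expBladeSub (fun i => eb i) (a ∪ c ∪ e')) := by
  have hEmul := Ee_mul_Ee (fun i : Fin n => (eb i : X))
  have hLCE := LC_Ee eb ginv hginv lc hlc_one hlc_vec hlc_mul LC hLC_one hLC_vec hLC_mul
  constructor
  · -- Part 1 : x ∪ y ≠ ∅
    intro hxy
    obtain ⟨t, ht⟩ := Finset.nonempty_iff_ne_empty.mpr hxy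
    rcases Finset.mem_union.mp ht with htx | hty
    · -- t ∈ x : t ∈ J, t ∉ I, t ∉ K
      rw [hx, Finset.mem_sdiff, Finset.mem_union] at htx
      obtain ⟨htJ, htIK⟩ := htx
      have h1 : ¬ J ⊆ K := fun h => htIK (Or.inr (h htJ))
      have h2 : ¬ J ⊆ I ∪ K := fun h => htIK (Finset.mem_union.mp (h htJ))
      rw [hscomm, hLCE J K, if_neg h1, mul_zero, hEmul I K]
      by_cases hIK : Disjoint I K
      · rw [if_pos hIK, map_smul, hLCE J (I ∪ K), if_neg h2, smul_zero, smul_zero, sub_zero]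
      · rw [if_neg hIK, map_zero, smul_zero, sub_zero]
    · -- t ∈ y : t ∈ I, t ∈ K, t ∉ J
      rw [hy, Finset.mem_sdiff, Finset.mem_inter] at hty
      obtain ⟨⟨htI, htK⟩, htJ⟩ := hty
      have h3 : ¬ Disjoint I K := fun h => (Finset.disjoint_left.mp h htI) htK
      rw [hscomm, hEmul I K, if_neg h3, map_zero, smul_zero, sub_zero, hLCE J K]
      by_cases hJK : J ⊆ K
      · have h4 : ¬ Disjoint I (K \ J) := fun h =>
          (Finset.disjoint_left.mp h htI) (Finset.mem_sdiff.mpr ⟨htK, htJ⟩)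
        rw [if_pos hJK, mul_smul_comm, hEmul I (K \ J), if_neg h4, smul_zero]
      · rw [if_neg hJK, mul_zero]
  · -- Part 2 : x ∪ y = ∅
    intro hxy
    obtain ⟨hx0, hy0⟩ := Finset.union_eq_empty.mp hxy
    rw [hx0] at hx; rw [hy0] at hy
    have hxm : ∀ t, t ∈ J → t ∈ I ∨ t ∈ K := by
      intro t htJ
      by_contra hcon
      push_neg at hcon
      have : t ∈ J \ (I ∪ K) := Finset.mem_sdiff.mpr ⟨htJ, by
        rw [Finset.mem_union]; tauto⟩
      rw [← hx] at this
      exact absurd this (Finset.notMem_empty t)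
    have hym : ∀ t, t ∈ I → t ∈ K → t ∈ J := by
      intro t htI htK
      by_contra hcon
      have : t ∈ (I ∩ K) \ J := Finset.mem_sdiff.mpr ⟨Finset.mem_inter.mpr ⟨htI, htK⟩, hcon⟩
      rw [← hy] at this
      exact absurd this (Finset.notMem_empty t)
    -- basic disjointness facts
    have hab : Disjoint a b := by
      rw [ha, hb, Finset.disjoint_left]
      intro t h1 h2
      rw [Finset.mem_sdiff] at h1 h2
      exact h1.2 (Finset.mem_union.mpr (Or.inl (Finset.mem_inter.mp h2.1).1))
    have hT1 : expBladeSub (fun i => eb i) I *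
        LC (expBladeSub (fun i => eb i) J) (expBladeSub (fun i => eb i) K) =
        ((if d = ∅ then (1 : ℝ) else 0) *
          (-1 : ℝ) ^ (d.card + pairsCount (a ∪ b) (d ∪ e'))) •
          expBladeSub (fun i => eb i) (a ∪ c ∪ e') := by
      by_cases hdE : d = ∅
      · have hdm : ∀ t, t ∈ I → t ∈ J → t ∈ K := by
          intro t h1 h2
          by_contra hcon
          have : t ∈ (I ∩ J) \ K := Finset.mem_sdiff.mpr ⟨Finset.mem_inter.mpr ⟨h1, h2⟩, hcon⟩
          rw [← hd, hdE] at this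
          exact absurd this (Finset.notMem_empty t)
        have hJK : J ⊆ K := by
          intro t htJ
          rcases hxm t htJ with h1 | h1
          · exact hdm t h1 htJ
          · exact h1
        have hKJ : K \ J = e' := by
          rw [he]
          ext t
          have h1 := hym t
          simp only [Finset.mem_sdiff, Finset.mem_union]
          tauto
        have hIe : Disjoint I e' := by
          rw [he, Finset.disjoint_left]
          intro t h1 h2
          rw [Finset.mem_sdiff, Finset.mem_union] at h2
          exact h2.2 (Or.inl h1)
        have hIac : I = a ∪ c := by
          ext t
          have h1 := hym t
          have h2 := hdm t
          rw [ha, hc]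
          simp only [Finset.mem_union, Finset.mem_sdiff, Finset.mem_inter]
          tauto
        have hJbc : J = b ∪ c := by
          ext t
          have h1 := hxm t
          have h2 := hdm t
          rw [hb, hc]
          simp only [Finset.mem_union, Finset.mem_sdiff, Finset.mem_inter]
          tauto
        have hbc : Disjoint b c := by
          rw [hb, hc, Finset.disjoint_left]
          intro t h1 h2
          rw [Finset.mem_sdiff] at h1
          rw [Finset.mem_inter, Finset.mem_inter] at h2
          exact h1.2 h2.1.1
        have hac : Disjoint a c := by
          rw [ha, hc, Finset.disjoint_left]
          intro t h1 h2
          rw [Finset.mem_sdiff, Finset.mem_union] at h1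
          rw [Finset.mem_inter, Finset.mem_inter] at h2
          exact h1.2 (Or.inl h2.1.2)
        rw [hLCE J K, if_pos hJK, mul_smul_comm, hKJ, hEmul I e', if_pos hIe,
          smul_smul, ← pow_add, if_pos hdE, one_mul]
        have hsets : I ∪ e' = a ∪ c ∪ e' := by rw [hIac]
        rw [hsets]
        congr 1
        apply negpow_eq
        rw [hdE]
        have hexp1 : pairsCount J e' = pairsCount b e' + pairsCount c e' := by
          rw [hJbc, pairsCount_union_left _ hbc]
        have hexp2 : pairsCount I e' = pairsCount a e' + pairsCount c e' := by
          rw [hIac, pairsCount_union_left _ hac]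
        have hexp3 : pairsCount (a ∪ b) ((∅ : Finset (Fin n)) ∪ e') = pairsCount a e' + pairsCount b e' := by
          rw [Finset.empty_union, pairsCount_union_left _ hab]
        rw [hexp1, hexp2, hexp3]
        push_cast
        have hzz : ∀ z : ZMod 2, z + z = 0 := by decide
        simp only [Finset.card_empty, Nat.cast_zero]
        linear_combination hzz ((pairsCount c e' : ZMod 2))
      · have ht : ∃ t, t ∈ I ∧ t ∈ J ∧ t ∉ K := by
          obtain ⟨t, ht⟩ := Finset.nonempty_iff_ne_empty.mpr (fun h => hdE (hd.trans h))
          rw [Finset.mem_sdiff, Finset.mem_inter] at ht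
          exact ⟨t, ht.1.1, ht.1.2, ht.2⟩
        obtain ⟨t, htI, htJ, htK⟩ := ht
        have hnJK : ¬ J ⊆ K := fun h => htK (h htJ)
        rw [hLCE J K, if_neg hnJK, mul_zero, if_neg hdE, zero_mul, zero_smul]
    have hT2 : ((-1 : ℝ) ^ (I.card * J.card)) •
        LC (expBladeSub (fun i => eb i) J)
          (expBladeSub (fun i => eb i) I * expBladeSub (fun i => eb i) K) =
        ((if c = ∅ then (1 : ℝ) else 0) *
          (-1 : ℝ) ^ (d.card + pairsCount (a ∪ b) (d ∪ e'))) •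
          expBladeSub (fun i => eb i) (a ∪ c ∪ e') := by
      by_cases hcE : c = ∅
      · have hcm : ∀ t, t ∈ I → t ∈ J → t ∈ K → False := by
          intro t h1 h2 h3
          have : t ∈ I ∩ J ∩ K :=
            Finset.mem_inter.mpr ⟨Finset.mem_inter.mpr ⟨h1, h2⟩, h3⟩
          rw [← hc, hcE] at this
          exact absurd this (Finset.notMem_empty t)
        have hIK : Disjoint I K := by
          rw [Finset.disjoint_left]
          intro t h1 h2
          exact hcm t h1 (hym t h1 h2) h2
        have hJIK : J ⊆ I ∪ K := fun t ht => Finset.mem_union.mpr (hxm t ht)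
        have hIKJ : (I ∪ K) \ J = a ∪ e' := by
          rw [ha, he]
          ext t
          have h1 := hym t
          have h2 := hcm t
          simp only [Finset.mem_sdiff, Finset.mem_union]
          tauto
        have hace : a ∪ c ∪ e' = a ∪ e' := by rw [hcE, Finset.union_empty]
        have hIad : I = a ∪ d := by
          ext t
          have h1 := hym t
          have h2 := hcm t
          rw [ha, hd]
          simp only [Finset.mem_union, Finset.mem_sdiff, Finset.mem_inter]
          tauto
        have hJbd : J = b ∪ d := by
          ext t
          have h1 := hxm t
          have h2 := hcm t
          rw [hb, hd]
          simp only [Finset.mem_union, Finset.mem_sdiff, Finset.mem_inter]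
          tauto
        have hKbe : K = b ∪ e' := by
          ext t
          have h1 := hym t
          have h2 := hcm t
          rw [hb, he]
          simp only [Finset.mem_union, Finset.mem_sdiff, Finset.mem_inter]
          tauto
        have had : Disjoint a d := by
          rw [ha, hd, Finset.disjoint_left]
          intro t h1 h2
          rw [Finset.mem_sdiff, Finset.mem_union] at h1
          rw [Finset.mem_sdiff, Finset.mem_inter] at h2
          exact h1.2 (Or.inl h2.1.2)
        have hbd : Disjoint b d := by
          rw [hb, hd, Finset.disjoint_left]
          intro t h1 h2
          rw [Finset.mem_sdiff] at h1
          rw [Finset.mem_sdiff, Finset.mem_inter] at h2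
          exact h1.2 h2.1.1
        have hbe : Disjoint b e' := by
          rw [hb, he, Finset.disjoint_left]
          intro t h1 h2
          rw [Finset.mem_sdiff] at h1
          rw [Finset.mem_sdiff, Finset.mem_union] at h2
          exact h2.2 (Or.inr (Finset.mem_inter.mp h1.1).1)
        have hae : Disjoint a e' := by
          rw [ha, he, Finset.disjoint_left]
          intro t h1 h2
          rw [Finset.mem_sdiff] at h1
          rw [Finset.mem_sdiff, Finset.mem_union] at h2
          exact h2.2 (Or.inl h1.1)
        have hde : Disjoint d e' := by
          rw [hd, he, Finset.disjoint_left]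
          intro t h1 h2
          rw [Finset.mem_sdiff, Finset.mem_inter] at h1
          rw [Finset.mem_sdiff, Finset.mem_union] at h2
          exact h2.2 (Or.inl h1.1.1)
        rw [hEmul I K, if_pos hIK, map_smul, hLCE J (I ∪ K), if_pos hJIK, hIKJ,
          smul_smul, smul_smul, ← pow_add, ← pow_add, if_pos hcE, one_mul, hace]
        congr 1
        apply negpow_eq
        have hcard1 : I.card = a.card + d.card := by
          rw [hIad, Finset.card_union_of_disjoint had]
        have hcard2 : J.card = b.card + d.card := by
          rw [hJbd, Finset.card_union_of_disjoint hbd]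
        have hexp1 : pairsCount I K =
            pairsCount a b + pairsCount a e' + (pairsCount d b + pairsCount d e') := by
          rw [hIad, hKbe, pairsCount_union_left _ had,
            pairsCount_union_right _ hbe, pairsCount_union_right _ hbe]
        have hexp2 : pairsCount J (a ∪ e') =
            pairsCount b a + pairsCount b e' + (pairsCount d a + pairsCount d e') := by
          rw [hJbd, pairsCount_union_left _ hbd,
            pairsCount_union_right _ hae, pairsCount_union_right _ hae]
        have hexp3 : pairsCount (a ∪ b) (d ∪ e') =
            pairsCount a d + pairsCount a e' + (pairsCount b d + pairsCount b e') := by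
          rw [pairsCount_union_left _ hab, pairsCount_union_right _ hde,
            pairsCount_union_right _ hde]
        rw [hcard1, hcard2, hexp1, hexp2, hexp3]
        push_cast
        have hzz : ∀ z : ZMod 2, z + z = 0 := by decide
        have hss : ∀ z : ZMod 2, z * z = z := by decide
        have h1 : (pairsCount a b : ZMod 2) + pairsCount b a = (a.card : ZMod 2) * b.card := by
          have := pairsCount_add_swap hab
          calc (pairsCount a b : ZMod 2) + pairsCount b a
              = ((pairsCount a b + pairsCount b a : ℕ) : ZMod 2) := by push_cast; ring
            _ = ((a.card * b.card : ℕ) : ZMod 2) := by rw [this]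
            _ = (a.card : ZMod 2) * b.card := by push_cast; ring
        have h2 : (pairsCount a d : ZMod 2) + pairsCount d a = (a.card : ZMod 2) * d.card := by
          have := pairsCount_add_swap had
          calc (pairsCount a d : ZMod 2) + pairsCount d a
              = ((pairsCount a d + pairsCount d a : ℕ) : ZMod 2) := by push_cast; ring
            _ = ((a.card * d.card : ℕ) : ZMod 2) := by rw [this]
            _ = (a.card : ZMod 2) * d.card := by push_cast; ring
        have h3 : (pairsCount b d : ZMod 2) + pairsCount d b = (b.card : ZMod 2) * d.card := by
          have := pairsCount_add_swap hbd
          calc (pairsCount b d : ZMod 2) + pairsCount d b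
              = ((pairsCount b d + pairsCount d b : ℕ) : ZMod 2) := by push_cast; ring
            _ = ((b.card * d.card : ℕ) : ZMod 2) := by rw [this]
            _ = (b.card : ZMod 2) * d.card := by push_cast; ring
        have h4 : (d.card : ZMod 2) * d.card = (d.card : ZMod 2) := hss _
        linear_combination h1 - h2 + h3 + h4 + hzz ((pairsCount d e' : ZMod 2)) +
          hzz ((a.card : ZMod 2) * b.card + (d.card : ZMod 2) * b.card +
            (pairsCount d a : ZMod 2)) - hzz ((pairsCount b d : ZMod 2))
      · have ht : ∃ t, t ∈ I ∧ t ∈ K := by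
          obtain ⟨t, ht⟩ := Finset.nonempty_iff_ne_empty.mpr (fun h => hcE (hc.trans h))
          rw [Finset.mem_inter, Finset.mem_inter] at ht
          exact ⟨t, ht.1.1, ht.2⟩
        obtain ⟨t, htI, htK⟩ := ht
        have hnIK : ¬ Disjoint I K := fun h => (Finset.disjoint_left.mp h htI) htK
        rw [hEmul I K, if_neg hnIK, map_zero, smul_zero, if_neg hcE, zero_mul, zero_smul]
    rw [hscomm, hT1, hT2, ← sub_smul]
    congr 1
    ring
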